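/- Let E be a finite set with symmetric submodular order function. Then there exists a tree-decomposition of E such that any two maximal tangles are distinguished efficiently by a separation corresponding to an edge of the decomposition tree. -/

import Mathlib

variable {E : Type*}

/-- `f` is symmetric: `f X = f (E \ X)` for all `X ⊆ E`. -/
def FSymm (f : Set E → ℤ) : Prop := ∀ X : Set E, f X = f Xᶜ

/-- `f` is submodular. -/
def FSubmod (f : Set E → ℤ) : Prop :=
  ∀ X Y : Set E, f (X ∩ Y) + f (X ∪ Y) ≤ f X + f Y

/-- Separations `(A,B)` and `(C,D)` are nested: some side of the first
is contained in some side of the second. -/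
def Nested (A B C D : Set E) : Prop := A ⊆ C ∨ A ⊆ D ∨ B ⊆ C ∨ B ⊆ D

/-- `T` is a tangle of order `k+1`: a set of small sides of separations of
order at most `k`, orienting every separation of order at most `k`, such that
no three small sides cover `E` and the complement of a singleton is never small. -/
def IsTangle (f : Set E → ℤ) (k : ℤ) (T : Set (Set E)) : Prop :=
  (∀ A ∈ T, f A ≤ k) ∧
  (∀ A : Set E, f A ≤ k → A ∈ T ∨ Aᶜ ∈ T) ∧
  (∀ A₁ ∈ T, ∀ A₂ ∈ T, ∀ A₃ ∈ T, A₁ ∪ A₂ ∪ A₃ ≠ Set.univ) ∧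
  (∀ e : E, ({e}ᶜ : Set E) ∉ T)

/-- A tangle is maximal if it is not included in any other tangle. -/
def IsMaximalTangle (f : Set E → ℤ) (T : Set (Set E)) : Prop :=
  (∃ k, IsTangle f k T) ∧
  ∀ T' : Set (Set E), (∃ k, IsTangle f k T') → T ⊆ T' → T' = T

/-- The separation with sides `A`, `Aᶜ` distinguishes the tangles `P` and `Q`. -/
def Distinguishes (A : Set E) (P Q : Set (Set E)) : Prop :=
  (A ∈ P ∧ Aᶜ ∈ Q) ∨ (Aᶜ ∈ P ∧ A ∈ Q)

/-- The separation with sides `A`, `Aᶜ` distinguishes `P` and `Q` efficiently. -/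
def DistinguishesEff (f : Set E → ℤ) (A : Set E) (P Q : Set (Set E)) : Prop :=
  Distinguishes A P Q ∧ ∀ C : Set E, Distinguishes C P Q → f A ≤ f C

variable {V : Type*}

/-- `P` is a partition of `E` into (possibly empty) classes indexed by `V`. -/
def IsPartitionFam (P : V → Set E) : Prop :=
  (∀ x y : V, x ≠ y → Disjoint (P x) (P y)) ∧ (⋃ x, P x) = Set.univ

/-- For an edge `tu` of the decomposition tree `G`, the side `S_t` of the
corresponding separation: the union of the parts over the component of
`G - tu` containing `t`. -/
def treeSide (G : SimpleGraph V) (P : V → Set E) (t u : V) : Set E :=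
  ⋃ x ∈ {x | (G.deleteEdges {s(t, u)}).Reachable t x}, P x

section Tangle
variable {f : Set E → ℤ} {k : ℤ} {T : Set (Set E)}

lemma t_le (h : IsTangle f k T) {A : Set E} (hA : A ∈ T) : f A ≤ k := h.1 A hA
lemma t_ori (h : IsTangle f k T) {A : Set E} (hA : f A ≤ k) : A ∈ T ∨ Aᶜ ∈ T := h.2.1 A hA
lemma t_cover3 (h : IsTangle f k T) {A B C : Set E} (hA : A ∈ T) (hB : B ∈ T) (hC : C ∈ T) :
    A ∪ B ∪ C ≠ Set.univ := h.2.2.1 A hA B hB C hC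
lemma t_cover2 (h : IsTangle f k T) {A B : Set E} (hA : A ∈ T) (hB : B ∈ T) :
    A ∪ B ≠ Set.univ := by
  have := t_cover3 h hA hB hB
  rwa [Set.union_assoc, Set.union_self] at this
lemma t_nuniv (h : IsTangle f k T) {A : Set E} (hA : A ∈ T) : A ≠ Set.univ := by
  have := t_cover2 h hA hA; rwa [Set.union_self] at this
lemma t_notboth (h : IsTangle f k T) {A : Set E} (hA : A ∈ T) : Aᶜ ∉ T := by
  intro hc
  exact t_cover2 h hA hc (Set.union_compl_self A)
lemma t_union (h : IsTangle f k T) {A B : Set E} (hA : A ∈ T) (hB : B ∈ T)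
    (hf : f (A ∪ B) ≤ k) : A ∪ B ∈ T := by
  rcases t_ori h hf with h1 | h1
  · exact h1
  · exact absurd (Set.union_compl_self (A ∪ B)) (t_cover3 h hA hB h1)
end Tangle

section Sym
variable {f : Set E → ℤ}

lemma fsymm_compl (hsym : FSymm f) (A : Set E) : f Aᶜ = f A := (hsym A).symm

lemma dist_symm {A : Set E} {P Q : Set (Set E)} (h : Distinguishes A P Q) :
    Distinguishes A Q P := by rcases h with ⟨h1, h2⟩ | ⟨h1, h2⟩
                              · exact Or.inr ⟨h2, h1⟩
                              · exact Or.inl ⟨h2, h1⟩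
lemma dist_compl {A : Set E} {P Q : Set (Set E)} (h : Distinguishes A P Q) :
    Distinguishes Aᶜ P Q := by
  rcases h with ⟨h1, h2⟩ | ⟨h1, h2⟩
  · exact Or.inr ⟨by rwa [compl_compl], h2⟩
  · exact Or.inl ⟨h1, by rwa [compl_compl]⟩
lemma distEff_symm {A : Set E} {P Q : Set (Set E)} (h : DistinguishesEff f A P Q) :
    DistinguishesEff f A Q P :=
  ⟨dist_symm h.1, fun C hC => h.2 C (dist_symm hC)⟩
lemma distEff_compl (hsym : FSymm f) {A : Set E} {P Q : Set (Set E)}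
    (h : DistinguishesEff f A P Q) : DistinguishesEff f Aᶜ P Q :=
  ⟨dist_compl h.1, fun C hC => (fsymm_compl hsym A) ▸ h.2 C hC⟩

lemma nested_comm {A C : Set E} (h : Nested A Aᶜ C Cᶜ) : Nested C Cᶜ A Aᶜ := by
  rcases h with h | h | h | h
  · exact Or.inr (Or.inr (Or.inr (Set.compl_subset_compl.2 h)))
  · exact Or.inr (Or.inl (by simpa using Set.compl_subset_compl.2 h))
  · exact Or.inr (Or.inr (Or.inl (by simpa using Set.compl_subset_compl.2 h)))
  · exact Or.inl (by simpa using Set.compl_subset_compl.2 h)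

lemma nested_complr {A C : Set E} (h : Nested A Aᶜ C Cᶜ) : Nested A Aᶜ Cᶜ Cᶜᶜ := by
  rw [compl_compl]
  rcases h with h | h | h | h
  · exact Or.inr (Or.inl h)
  · exact Or.inl h
  · exact Or.inr (Or.inr (Or.inr h))
  · exact Or.inr (Or.inr (Or.inl h))

lemma nested_compll {A C : Set E} (h : Nested A Aᶜ C Cᶜ) : Nested Aᶜ Aᶜᶜ C Cᶜ := by
  rw [compl_compl]
  rcases h with h | h | h | h
  · exact Or.inr (Or.inr (Or.inl h))
  · exact Or.inr (Or.inr (Or.inr h))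
  · exact Or.inl h
  · exact Or.inr (Or.inl h)

lemma nested_refl (A : Set E) : Nested A Aᶜ A Aᶜ := Or.inl subset_rfl

/-- Corner lemma: if `A` crosses `C` and `D` is nested with both, then `D` is
nested with the corner `A ∪ C`. -/
lemma nested_corner {A C D : Set E} (hcross : ¬ Nested A Aᶜ C Cᶜ)
    (hDA : Nested D Dᶜ A Aᶜ) (hDC : Nested D Dᶜ C Cᶜ) :
    Nested D Dᶜ (A ∪ C) (A ∪ C)ᶜ := by
  have hAC : (A ∩ C).Nonempty := by
    rw [Set.nonempty_iff_ne_empty]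
    intro h
    exact hcross (Or.inr (Or.inl (by rw [Set.subset_compl_iff_disjoint_right,
      Set.disjoint_iff_inter_eq_empty]; exact h)))
  rcases hDA with h | h | h | h
  · exact Or.inl (h.trans Set.subset_union_left)
  · -- D ⊆ Aᶜ
    rcases hDC with h2 | h2 | h2 | h2
    · exact Or.inl (h2.trans Set.subset_union_right)
    · exact Or.inr (Or.inl (by rw [Set.compl_union]; exact Set.subset_inter h h2))
    · exact Or.inr (Or.inr (Or.inl (h2.trans Set.subset_union_right)))
    · -- D ⊆ Aᶜ, Dᶜ ⊆ Cᶜ : A ⊆ Dᶜ? no: D ⊆ Aᶜ means A ∩ D = ∅; Dᶜ ⊆ Cᶜ means C ⊆ D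
      exfalso
      obtain ⟨x, hxA, hxC⟩ := hAC
      have hxD : x ∈ D := by
        have := Set.compl_subset_compl.1 h2
        exact this hxC
      exact (h hxD) hxA
  · exact Or.inr (Or.inr (Or.inl (h.trans Set.subset_union_left)))
  · -- Dᶜ ⊆ Aᶜ
    rcases hDC with h2 | h2 | h2 | h2
    · exact Or.inl (h2.trans Set.subset_union_right)
    · -- D ⊆ Cᶜ, Dᶜ ⊆ Aᶜ : A ⊆ D, C ∩ D = ∅
      exfalso
      obtain ⟨x, hxA, hxC⟩ := hAC
      have hxD : x ∈ D := (Set.compl_subset_compl.1 h) hxA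
      exact (h2 hxD) hxC
    · exact Or.inr (Or.inr (Or.inl (h2.trans Set.subset_union_right)))
    · exact Or.inr (Or.inr (Or.inr (by rw [Set.compl_union]; exact Set.subset_inter h h2)))
end Sym
section Fish
variable {f : Set E → ℤ} {kP kQ kP' kQ' : ℤ} {P Q P' Q' : Set (Set E)} {A C : Set E}

/-- Core contradiction lemma: one of the two corners has small order. -/
lemma fish_core (hsym : FSymm f) (hsub : FSubmod f)
    (hP : IsTangle f kP P) (hQ : IsTangle f kQ Q)
    (hP' : IsTangle f kP' P') (hQ' : IsTangle f kQ' Q')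
    (h1 : A ∈ P) (h2 : Aᶜ ∈ Q)
    (h3 : C ∈ P) (h4 : C ∈ Q) (h5 : f C ≤ f A)
    (h6 : C ∈ P') (h7 : Cᶜ ∈ Q')
    (heffC : ∀ D, Distinguishes D P' Q' → f C ≤ f D) :
    f (A ∪ C) ≤ f A ∨ f (Aᶜ ∪ C) ≤ f A := by
  by_contra hcon
  push_neg at hcon
  obtain ⟨hc1, hc2⟩ := hcon
  -- submodularity
  have s1 : f (A ∩ C) + f (A ∪ C) ≤ f A + f C := hsub A C
  have s2 : f (Aᶜ ∩ C) + f (Aᶜ ∪ C) ≤ f Aᶜ + f C := hsub Aᶜ C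
  rw [fsymm_compl hsym] at s2
  have g1 : f (A ∩ C) < f C := by linarith
  have g2 : f (Aᶜ ∩ C) < f C := by linarith
  -- both corners are oriented by P' and Q', and distinguish neither
  have hkP' : f C ≤ kP' := t_le hP' h6
  have hkQ' : f C ≤ kQ' := by have := t_le hQ' h7; rwa [fsymm_compl hsym] at this
  have ori1P := t_ori hP' (le_trans g1.le hkP')
  have ori1Q := t_ori hQ' (le_trans g1.le hkQ')
  have ori2P := t_ori hP' (le_trans g2.le hkP')
  have ori2Q := t_ori hQ' (le_trans g2.le hkQ')
  have nd1 : ¬ Distinguishes (A ∩ C) P' Q' := fun h => absurd (heffC _ h) (not_le.2 g1)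
  have nd2 : ¬ Distinguishes (Aᶜ ∩ C) P' Q' := fun h => absurd (heffC _ h) (not_le.2 g2)
  -- resolve orientations to be the same in P' and Q'
  have e1 : (A ∩ C ∈ P' ∧ A ∩ C ∈ Q') ∨ ((A ∩ C)ᶜ ∈ P' ∧ (A ∩ C)ᶜ ∈ Q') := by
    rcases ori1P with h | h <;> rcases ori1Q with h' | h'
    · exact Or.inl ⟨h, h'⟩
    · exact absurd (Or.inl ⟨h, h'⟩) nd1
    · exact absurd (Or.inr ⟨h, h'⟩) nd1
    · exact Or.inr ⟨h, h'⟩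
  have e2 : (Aᶜ ∩ C ∈ P' ∧ Aᶜ ∩ C ∈ Q') ∨ ((Aᶜ ∩ C)ᶜ ∈ P' ∧ (Aᶜ ∩ C)ᶜ ∈ Q') := by
    rcases ori2P with h | h <;> rcases ori2Q with h' | h'
    · exact Or.inl ⟨h, h'⟩
    · exact absurd (Or.inl ⟨h, h'⟩) nd2
    · exact absurd (Or.inr ⟨h, h'⟩) nd2
    · exact Or.inr ⟨h, h'⟩
  rcases e1 with ⟨p1, q1⟩ | ⟨p1, q1⟩ <;> rcases e2 with ⟨p2, q2⟩ | ⟨p2, q2⟩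
  · -- both small in Q' : (A∩C) ∪ (Aᶜ∩C) ∪ Cᶜ = univ
    refine t_cover3 hQ' q1 q2 h7 ?_
    rw [← Set.union_inter_distrib_right, Set.union_compl_self, Set.univ_inter,
      Set.union_compl_self]
  · -- A∩C small, (Aᶜ∩C)ᶜ small in P': C ∪ (Aᶜ∩C)ᶜ = univ
    refine t_cover2 hP' h6 p2 ?_
    rw [Set.compl_inter, compl_compl]
    rw [Set.union_comm, Set.union_assoc, Set.union_comm Cᶜ C, Set.union_compl_self,
      Set.union_univ]
  · -- (A∩C)ᶜ small, Aᶜ∩C small in P': C ∪ (A∩C)ᶜ = univ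
    refine t_cover2 hP' h6 p1 ?_
    rw [Set.compl_inter]
    rw [Set.union_comm, Set.union_assoc, Set.union_comm Cᶜ C, Set.union_compl_self,
      Set.union_univ]
  · -- both complements small in P' : union = univ
    refine t_cover2 hP' p1 p2 ?_
    rw [Set.compl_inter, Set.compl_inter, compl_compl]
    ext x; simp [em]
    tauto
  done

/-- The fish lemma with explicit orientations. -/
lemma fish_aux (hsym : FSymm f) (hsub : FSubmod f)
    (hP : IsTangle f kP P) (hQ : IsTangle f kQ Q)
    (hP' : IsTangle f kP' P') (hQ' : IsTangle f kQ' Q')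
    (h1 : A ∈ P) (h2 : Aᶜ ∈ Q)
    (heffA : ∀ D, Distinguishes D P Q → f A ≤ f D)
    (h3 : C ∈ P) (h4 : C ∈ Q) (h5 : f C ≤ f A)
    (h6 : C ∈ P') (h7 : Cᶜ ∈ Q')
    (heffC : ∀ D, Distinguishes D P' Q' → f C ≤ f D)
    (hcross : ¬ Nested A Aᶜ C Cᶜ) :
    ∃ A', DistinguishesEff f A' P Q ∧ Nested A' A'ᶜ C Cᶜ ∧
      ∀ D, Nested D Dᶜ A Aᶜ → Nested D Dᶜ C Cᶜ → Nested D Dᶜ A' A'ᶜ := by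
  have hkP : f A ≤ kP := t_le hP h1
  have hkQ : f A ≤ kQ := by have := t_le hQ h2; rwa [fsymm_compl hsym] at this
  rcases fish_core hsym hsub hP hQ hP' hQ' h1 h2 h3 h4 h5 h6 h7 heffC with hle | hle
  · refine ⟨A ∪ C, ⟨?_, fun D hD => le_trans hle (heffA D hD)⟩, ?_, ?_⟩
    · -- A ∪ C distinguishes P Q
      have hPin : A ∪ C ∈ P := t_union hP h1 h3 (hle.trans hkP)
      have hQin : (A ∪ C)ᶜ ∈ Q := by
        rcases t_ori hQ (hle.trans hkQ) with h | h
        · exact absurd (by rw [Set.union_comm A C, Set.union_assoc, Set.union_compl_self,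
            Set.union_univ]) (t_cover2 hQ h h2)
        · exact h
      exact Or.inl ⟨hPin, hQin⟩
    · exact Or.inr (Or.inr (Or.inr (by rw [Set.compl_union]; exact Set.inter_subset_right)))
    · exact fun D hDA hDC => nested_corner hcross hDA hDC
  · refine ⟨Aᶜ ∪ C, ⟨?_, fun D hD => le_trans hle (heffA D hD)⟩, ?_, ?_⟩
    · -- Aᶜ ∪ C distinguishes P Q (small in Q)
      have hQin : Aᶜ ∪ C ∈ Q := t_union hQ h2 h4 (hle.trans hkQ)
      have hPin : (Aᶜ ∪ C)ᶜ ∈ P := by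
        rcases t_ori hP (hle.trans hkP) with h | h
        · exact absurd (by rw [← Set.union_assoc, Set.union_compl_self, Set.univ_union])
            (t_cover2 hP h1 h)
        · exact h
      exact Or.inr ⟨hPin, hQin⟩
    · exact Or.inr (Or.inr (Or.inr (by rw [Set.compl_union]; exact Set.inter_subset_right)))
    · intro D hDA hDC
      have hcross' : ¬ Nested Aᶜ Aᶜᶜ C Cᶜ := fun h => hcross (by simpa using nested_compll h)
      exact nested_corner hcross' (nested_complr hDA) hDC
  done
end Fish
section Stage1
variable {f : Set E → ℤ} {P Q P' Q' : Set (Set E)} {A C : Set E}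

lemma fish_mid (hsym : FSymm f) (hsub : FSubmod f)
    (hP : ∃ k, IsTangle f k P) (hQ : ∃ k, IsTangle f k Q)
    (hP' : ∃ k, IsTangle f k P') (hQ' : ∃ k, IsTangle f k Q')
    (h1 : A ∈ P) (h2 : Aᶜ ∈ Q)
    (heffA : ∀ D, Distinguishes D P Q → f A ≤ f D)
    (hC : DistinguishesEff f C P' Q')
    (h5 : f C ≤ f A) (hnd : ¬ Distinguishes C P Q) (hcross : ¬ Nested A Aᶜ C Cᶜ) :
    ∃ A', DistinguishesEff f A' P Q ∧ Nested A' A'ᶜ C Cᶜ ∧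
      ∀ D, Nested D Dᶜ A Aᶜ → Nested D Dᶜ C Cᶜ → Nested D Dᶜ A' A'ᶜ := by
  obtain ⟨kP, hPk⟩ := hP; obtain ⟨kQ, hQk⟩ := hQ
  obtain ⟨kP', hPk'⟩ := hP'; obtain ⟨kQ', hQk'⟩ := hQ'
  have hkP : f C ≤ kP := h5.trans (t_le hPk h1)
  have hkQ : f C ≤ kQ := by
    have := t_le hQk h2; rw [fsymm_compl hsym] at this; exact h5.trans this
  have hsame : (C ∈ P ∧ C ∈ Q) ∨ (Cᶜ ∈ P ∧ Cᶜ ∈ Q) := by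
    rcases t_ori hPk hkP with h | h <;> rcases t_ori hQk hkQ with h' | h'
    · exact Or.inl ⟨h, h'⟩
    · exact absurd (Or.inl ⟨h, h'⟩) hnd
    · exact absurd (Or.inr ⟨h, h'⟩) hnd
    · exact Or.inr ⟨h, h'⟩
  rcases hsame with ⟨h3, h4⟩ | ⟨h3, h4⟩
  · rcases hC.1 with ⟨h6, h7⟩ | ⟨h6, h7⟩
    · exact fish_aux hsym hsub hPk hQk hPk' hQk' h1 h2 heffA h3 h4 h5 h6 h7 hC.2
        hcross
    · exact fish_aux hsym hsub hPk hQk hQk' hPk' h1 h2 heffA h3 h4 h5 h7 h6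
        (fun D hD => hC.2 D (dist_symm hD)) hcross
  · -- use Cᶜ in place of C
    have hC' : DistinguishesEff f Cᶜ P' Q' := distEff_compl hsym hC
    have h5' : f Cᶜ ≤ f A := by rwa [fsymm_compl hsym]
    have hcross' : ¬ Nested A Aᶜ Cᶜ Cᶜᶜ := fun h => hcross (by simpa using nested_complr h)
    have key : ∃ A', DistinguishesEff f A' P Q ∧ Nested A' A'ᶜ Cᶜ Cᶜᶜ ∧
        ∀ D, Nested D Dᶜ A Aᶜ → Nested D Dᶜ Cᶜ Cᶜᶜ → Nested D Dᶜ A' A'ᶜ := by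
      rcases hC'.1 with ⟨h6, h7⟩ | ⟨h6, h7⟩
      · exact fish_aux hsym hsub hPk hQk hPk' hQk' h1 h2 heffA h3 h4 h5' h6 h7 hC'.2
          hcross'
      · exact fish_aux hsym hsub hPk hQk hQk' hPk' h1 h2 heffA h3 h4 h5' h7 h6
          (fun D hD => hC'.2 D (dist_symm hD)) hcross'
    obtain ⟨A', hA'1, hA'2, hA'3⟩ := key
    refine ⟨A', hA'1, by simpa using nested_complr hA'2, fun D hDA hDC => hA'3 D hDA
      (nested_complr hDC)⟩

lemma fish (hsym : FSymm f) (hsub : FSubmod f)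
    (hP : ∃ k, IsTangle f k P) (hQ : ∃ k, IsTangle f k Q)
    (hP' : ∃ k, IsTangle f k P') (hQ' : ∃ k, IsTangle f k Q')
    (hA : DistinguishesEff f A P Q)
    (hC : DistinguishesEff f C P' Q')
    (h5 : f C ≤ f A) (hnd : ¬ Distinguishes C P Q) (hcross : ¬ Nested A Aᶜ C Cᶜ) :
    ∃ A', DistinguishesEff f A' P Q ∧ Nested A' A'ᶜ C Cᶜ ∧
      ∀ D, Nested D Dᶜ A Aᶜ → Nested D Dᶜ C Cᶜ → Nested D Dᶜ A' A'ᶜ := by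
  rcases hA.1 with ⟨h1, h2⟩ | ⟨h1, h2⟩
  · exact fish_mid hsym hsub hP hQ hP' hQ' h1 h2 hA.2 hC h5 hnd hcross
  · have key := fish_mid hsym hsub hQ hP hP' hQ' h2 h1
      (fun D hD => hA.2 D (dist_symm hD)) hC h5 (fun h => hnd (dist_symm h)) hcross
    obtain ⟨A', hA'1, hA'2, hA'3⟩ := key
    exact ⟨A', distEff_symm hA'1, hA'2, hA'3⟩

lemma exists_dist (hP : IsMaximalTangle f P) (hQ : IsMaximalTangle f Q) (hne : P ≠ Q) :
    ∃ D, Distinguishes D P Q := by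
  by_contra hcon
  push_neg at hcon
  obtain ⟨kP, hPk⟩ := hP.1; obtain ⟨kQ, hQk⟩ := hQ.1
  rcases le_total kP kQ with hle | hle
  · have hsub : P ⊆ Q := by
      intro A hA
      rcases t_ori hQk ((t_le hPk hA).trans hle) with h | h
      · exact h
      · exact absurd (Or.inl ⟨hA, h⟩) (hcon A)
    exact hne ((hP.2 Q ⟨kQ, hQk⟩ hsub).symm)
  · have hsub : Q ⊆ P := by
      intro A hA
      rcases t_ori hPk ((t_le hQk hA).trans hle) with h | h
      · exact h
      · exact absurd (Or.inr ⟨h, hA⟩) (hcon A)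
    exact hne (hQ.2 P ⟨kP, hPk⟩ hsub)

lemma dist_proper (hP : ∃ k, IsTangle f k P) (hQ : ∃ k, IsTangle f k Q)
    (h : Distinguishes A P Q) : A ≠ ∅ ∧ A ≠ Set.univ := by
  obtain ⟨kP, hPk⟩ := hP; obtain ⟨kQ, hQk⟩ := hQ
  constructor
  · rintro rfl
    rcases h with ⟨h1, h2⟩ | ⟨h1, h2⟩
    · exact t_nuniv hQk h2 (by simp)
    · exact t_nuniv hPk h1 (by simp)
  · rintro rfl
    rcases h with ⟨h1, h2⟩ | ⟨h1, h2⟩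
    · exact t_nuniv hPk h1 rfl
    · exact t_nuniv hQk h2 rfl

lemma stage1 [Fintype E] (f : Set E → ℤ) (hsym : FSymm f) (hsub : FSubmod f) :
    ∃ N : Finset (Set E), (∀ A ∈ N, ∀ B ∈ N, Nested A Aᶜ B Bᶜ) ∧
      (∀ A ∈ N, A ≠ ∅ ∧ A ≠ Set.univ) ∧
      (∀ P Q : Set (Set E), IsMaximalTangle f P → IsMaximalTangle f Q → P ≠ Q →
        ∃ A ∈ N, DistinguishesEff f A P Q) := by
  classical
  set U : Finset (Set E) → Set (Set (Set E) × Set (Set E)) := fun N =>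
    {pq | IsMaximalTangle f pq.1 ∧ IsMaximalTangle f pq.2 ∧ pq.1 ≠ pq.2 ∧
      ¬ ∃ A ∈ N, DistinguishesEff f A pq.1 pq.2} with hU
  have main : ∀ n : ℕ, ∀ N : Finset (Set E), (U N).ncard = n →
      (∀ A ∈ N, ∀ B ∈ N, Nested A Aᶜ B Bᶜ) →
      (∀ A ∈ N, ∃ P Q, IsMaximalTangle f P ∧ IsMaximalTangle f Q ∧
        DistinguishesEff f A P Q) →
      (∀ A ∈ N, ∀ pq ∈ U N, ∀ D, Distinguishes D pq.1 pq.2 → f A ≤ f D) →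
      ∃ N' : Finset (Set E), (∀ A ∈ N', ∀ B ∈ N', Nested A Aᶜ B Bᶜ) ∧
        (∀ A ∈ N', ∃ P Q, IsMaximalTangle f P ∧ IsMaximalTangle f Q ∧
          DistinguishesEff f A P Q) ∧ U N' = ∅ := by
    intro n
    induction n using Nat.strong_induction_on with
    | _ n IH =>
      intro N hcard inv1 inv2 inv3
      rcases Set.eq_empty_or_nonempty (U N) with hUe | hUne
      · exact ⟨N, inv1, inv2, hUe⟩
      -- pick a minimum-order distinguisher over all unhandled pairs
      obtain ⟨pq₀, hpq₀⟩ := hUne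
      obtain ⟨D₀, hD₀⟩ := exists_dist hpq₀.1 hpq₀.2.1 hpq₀.2.2.1
      set Ω : Set ((Set (Set E) × Set (Set E)) × Set E) :=
        {x | x.1 ∈ U N ∧ Distinguishes x.2 x.1.1 x.1.2} with hΩ
      obtain ⟨⟨⟨Pt, Qt⟩, A₀⟩, ⟨hmemU, hdist0⟩, hmin⟩ :=
        Set.exists_min_image Ω (fun x => f x.2) (Set.toFinite _) ⟨(pq₀, D₀), hpq₀, hD₀⟩
      have heffA₀ : DistinguishesEff f A₀ Pt Qt :=
        ⟨hdist0, fun D hD => hmin ((Pt, Qt), D) ⟨hmemU, hD⟩⟩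
      -- among efficient distinguishers of (Pt,Qt), minimize the number of crossings
      set cn : Set E → ℕ := fun X => {C | C ∈ N ∧ ¬ Nested X Xᶜ C Cᶜ}.ncard with hcn
      obtain ⟨A, hAeff, hAmin⟩ := Set.exists_min_image
        {X | DistinguishesEff f X Pt Qt} cn (Set.toFinite _) ⟨A₀, heffA₀⟩
      have hPtm : IsMaximalTangle f Pt := hmemU.1
      have hQtm : IsMaximalTangle f Qt := hmemU.2.1
      -- A crosses nothing in N
      have cz : {C | C ∈ N ∧ ¬ Nested A Aᶜ C Cᶜ} = ∅ := by
        by_contra hcz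
        obtain ⟨C, hCN, hcross⟩ := Set.nonempty_iff_ne_empty.2 hcz
        obtain ⟨P', Q', hP'm, hQ'm, hCeff⟩ := inv2 C hCN
        have hCle : f C ≤ f A := inv3 C hCN (Pt, Qt) hmemU A hAeff.1
        have hnd : ¬ Distinguishes C Pt Qt := by
          intro h
          exact hmemU.2.2.2 ⟨C, hCN, h, fun D hD => inv3 C hCN (Pt, Qt) hmemU D hD⟩
        obtain ⟨A', hA'eff, hA'C, hA'D⟩ := fish hsym hsub hPtm.1 hQtm.1 hP'm.1 hQ'm.1
          hAeff hCeff hCle hnd hcross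
        have hsubset : {C' | C' ∈ N ∧ ¬ Nested A' A'ᶜ C' C'ᶜ} ⊂
            {C' | C' ∈ N ∧ ¬ Nested A Aᶜ C' C'ᶜ} := by
          constructor
          · rintro C' ⟨hC'N, hC'cross⟩
            refine ⟨hC'N, fun hn => hC'cross ?_⟩
            exact nested_comm (hA'D C' (nested_comm hn) (inv1 C' hC'N C hCN))
          · intro hsup
            exact (hsup ⟨hCN, hcross⟩).2 hA'C
        have : cn A ≤ cn A' := hAmin A' hA'eff
        have : cn A' < cn A := Set.ncard_lt_ncard hsubset (Set.toFinite _)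
        omega
      -- add A to N
      refine IH ((U (insert A N)).ncard) ?_ (insert A N) rfl ?_ ?_ ?_
      · -- measure decreases
        rw [← hcard]
        refine Set.ncard_lt_ncard ⟨fun pq hpq => ?_, fun hsup => ?_⟩ (Set.toFinite _)
        · exact ⟨hpq.1, hpq.2.1, hpq.2.2.1, fun ⟨B, hB, hBeff⟩ =>
            hpq.2.2.2 ⟨B, Finset.mem_insert_of_mem hB, hBeff⟩⟩
        · exact (hsup hmemU).2.2.2 ⟨A, Finset.mem_insert_self _ _, hAeff⟩
      · -- nestedness
        have hAnest : ∀ Y ∈ N, Nested A Aᶜ Y Yᶜ := by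
          intro Y hY
          by_contra h
          exact Set.eq_empty_iff_forall_notMem.1 cz Y ⟨hY, h⟩
        intro X hX Y hY
        rcases Finset.mem_insert.1 hX with hXA | hXN
        · subst hXA
          rcases Finset.mem_insert.1 hY with hYA | hYN
          · subst hYA; exact nested_refl _
          · exact hAnest Y hYN
        · rcases Finset.mem_insert.1 hY with hYA | hYN
          · subst hYA; exact nested_comm (hAnest X hXN)
          · exact inv1 X hXN Y hYN
      · intro X hX
        rcases Finset.mem_insert.1 hX with rfl | hX
        · exact ⟨Pt, Qt, hPtm, hQtm, hAeff⟩
        · exact inv2 X hX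
      · intro X hX pq hpq D hD
        have hpqU : pq ∈ U N := ⟨hpq.1, hpq.2.1, hpq.2.2.1, fun ⟨B, hB, hBeff⟩ =>
          hpq.2.2.2 ⟨B, Finset.mem_insert_of_mem hB, hBeff⟩⟩
        rcases Finset.mem_insert.1 hX with rfl | hX
        · calc f X ≤ f A₀ := hAeff.2 A₀ hdist0
            _ ≤ f D := hmin (pq, D) ⟨hpqU, hD⟩
        · exact inv3 X hX pq hpqU D hD
  obtain ⟨N', h1, h2, h3⟩ := main ((U ∅).ncard) ∅ rfl (by simp) (by simp) (by simp)
  refine ⟨N', h1, ?_, ?_⟩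
  · intro A hA
    obtain ⟨P, Q, hPm, hQm, hAeff⟩ := h2 A hA
    exact dist_proper hPm.1 hQm.1 hAeff.1
  · intro P Q hPm hQm hne
    by_contra hcon
    push_neg at hcon
    have : (P, Q) ∈ U N' := ⟨hPm, hQm, hne, fun ⟨B, hB, hBeff⟩ => hcon B hB hBeff⟩
    rw [h3] at this
    exact this
end Stage1
section ParTree

open SimpleGraph

theorem partree {W : Type*} (par : W → W) (r : W) (hr : par r = r)
    (hterm : ∀ v, ∃ n, par^[n] v = r) :
    (SimpleGraph.fromRel (fun x y => par x = y)).IsTree ∧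
    ∀ v, v ≠ r →
      (SimpleGraph.fromRel (fun x y => par x = y)).Adj v (par v) ∧
      {x | ((SimpleGraph.fromRel (fun x y => par x = y)).deleteEdges
          {s(v, par v)}).Reachable v x} = {x | ∃ n, par^[n] x = v} ∧
      {x | ((SimpleGraph.fromRel (fun x y => par x = y)).deleteEdges
          {s(v, par v)}).Reachable (par v) x} = {x | ∃ n, par^[n] x = v}ᶜ := by
  set G := SimpleGraph.fromRel (fun x y => par x = y) with hG
  have pt_fix : ∀ n, par^[n] r = r := fun n => Function.iterate_fixed hr n
  have pt_ne : ∀ v, v ≠ r → par v ≠ v := by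
    intro v hv hfix
    obtain ⟨m, hm⟩ := hterm v
    rw [Function.iterate_fixed hfix m] at hm
    exact hv hm
  have pt_per : ∀ v n, v ≠ r → 0 < n → par^[n] v = v → False := by
    intro v n hv hn hcyc
    obtain ⟨m, hm⟩ := hterm v
    have h1 : par^[n * (m + 1)] v = v := by
      rw [Function.iterate_mul]
      exact Function.iterate_fixed hcyc (m + 1)
    have h2 : m ≤ n * (m + 1) := by nlinarith
    have h3 : par^[(n * (m + 1) - m) + m] v = v := by
      rwa [Nat.sub_add_cancel h2]
    rw [Function.iterate_add_apply, hm, pt_fix] at h3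
    exact hv h3.symm
  have D_mono : ∀ v x, (∃ n, par^[n] x = v) → x = v ∨ (∃ n, par^[n] (par x) = v) := by
    rintro v x ⟨n, hn⟩
    cases n with
    | zero => exact Or.inl hn
    | succ m => exact Or.inr ⟨m, by rwa [Function.iterate_succ_apply] at hn⟩
  have D_par : ∀ v x, (∃ n, par^[n] (par x) = v) → (∃ n, par^[n] x = v) := by
    rintro v x ⟨n, hn⟩
    exact ⟨n + 1, by rwa [Function.iterate_succ_apply]⟩
  have pt_parnot : ∀ v, v ≠ r → ¬ (∃ n, par^[n] (par v) = v) := by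
    rintro v hv ⟨n, hn⟩
    rw [← Function.iterate_succ_apply] at hn
    exact pt_per v (n + 1) hv (Nat.succ_pos n) hn
  have adj_par : ∀ v, par v ≠ v → G.Adj v (par v) := by
    intro v hv
    rw [hG, SimpleGraph.fromRel_adj]
    exact ⟨Ne.symm hv, Or.inl rfl⟩
  have greach : ∀ v, G.Reachable v r := by
    intro v
    obtain ⟨n, hn⟩ := hterm v
    induction n generalizing v with
    | zero =>
      rw [Function.iterate_zero_apply] at hn
      rw [← hn]
    | succ m IH =>
      by_cases hv : v = r
      · rw [hv]
      · exact ((adj_par v (pt_ne v hv)).reachable).trans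
          (IH (par v) (by rwa [Function.iterate_succ_apply] at hn))
  have hconn : G.Connected := by
    have : Nonempty W := ⟨r⟩
    exact ⟨fun a b => (greach a).trans (greach b).symm⟩
  -- reach class of v in the deleted graph is the set of descendants of v
  have reach_sub : ∀ v, v ≠ r → ∀ x,
      (G.deleteEdges {s(v, par v)}).Reachable v x → ∃ n, par^[n] x = v := by
    intro v hv x hx
    have step : ∀ a b, (G.deleteEdges {s(v, par v)}).Adj a b →
        (∃ n, par^[n] a = v) → (∃ n, par^[n] b = v) := by
      intro a b hab ha
      rw [SimpleGraph.deleteEdges_adj] at hab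
      obtain ⟨hadj, hne⟩ := hab
      rw [hG, SimpleGraph.fromRel_adj] at hadj
      rcases hadj.2 with hpa | hpb
      · rcases D_mono v a ha with rfl | hstep
        · exact absurd (by rw [Set.mem_singleton_iff, ← hpa]) hne
        · exact hpa ▸ hstep
      · exact D_par v b (hpb ▸ ha)
    have aux : ∀ (a y : W) (w : (G.deleteEdges {s(v, par v)}).Walk a y),
        (∃ n, par^[n] a = v) → (∃ n, par^[n] y = v) := by
      intro a y w
      induction w with
      | nil => exact id
      | cons h p IH => exact fun ha => IH (step _ _ h ha)
    obtain ⟨w⟩ := hx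
    exact aux v x w ⟨0, rfl⟩
  have reach_to : ∀ v, v ≠ r → ∀ x, (∃ n, par^[n] x = v) →
      (G.deleteEdges {s(v, par v)}).Reachable v x := by
    intro v hv x ⟨n, hn⟩
    induction n generalizing x with
    | zero =>
      rw [Function.iterate_zero_apply] at hn
      rw [hn]
    | succ m IH =>
      by_cases hxv : x = v
      · rw [hxv]
      · have hn' : par^[m] (par x) = v := by rwa [Function.iterate_succ_apply] at hn
        have hxpx : par x ≠ x := by
          intro hfix
          exact hxv (by rwa [Function.iterate_fixed hfix (m+1)] at hn)
        have hedge : s(x, par x) ∉ ({s(v, par v)} : Set (Sym2 W)) := by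
          rw [Set.mem_singleton_iff]
          intro he
          rcases Sym2.eq_iff.1 he with ⟨h1, h2⟩ | ⟨h1, h2⟩
          · exact hxv h1
          · -- x = par v, par x = v
            exact pt_parnot v hv ⟨1, by
              simp only [Function.iterate_one]; rw [← h1]; exact h2⟩
        have hadj : (G.deleteEdges {s(v, par v)}).Adj x (par x) := by
          rw [SimpleGraph.deleteEdges_adj]
          exact ⟨adj_par x hxpx, hedge⟩
        exact (IH (par x) hn').trans (hadj.reachable).symm
  have reach_out : ∀ v, v ≠ r → ∀ x, ¬ (∃ n, par^[n] x = v) →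
      (G.deleteEdges {s(v, par v)}).Reachable x r := by
    intro v hv x hx
    obtain ⟨n, hn⟩ := hterm x
    induction n generalizing x with
    | zero =>
      rw [Function.iterate_zero_apply] at hn
      rw [hn]
    | succ m IH =>
      by_cases hxr : x = r
      · rw [hxr]
      · have hpx : ¬ (∃ n, par^[n] (par x) = v) := fun h => hx (D_par v x h)
        have hn' : par^[m] (par x) = r := by rwa [Function.iterate_succ_apply] at hn
        have hedge : s(x, par x) ∉ ({s(v, par v)} : Set (Sym2 W)) := by
          rw [Set.mem_singleton_iff]
          intro he
          rcases Sym2.eq_iff.1 he with ⟨h1, h2⟩ | ⟨h1, h2⟩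
          · exact hx (h1 ▸ ⟨0, rfl⟩)
          · exact hpx (h2 ▸ ⟨0, rfl⟩)
        have hadj : (G.deleteEdges {s(v, par v)}).Adj x (par x) := by
          rw [SimpleGraph.deleteEdges_adj]
          exact ⟨adj_par x (pt_ne x hxr), hedge⟩
        exact (hadj.reachable).trans (IH (par x) hpx hn')
  have class_v : ∀ v, v ≠ r →
      {x | (G.deleteEdges {s(v, par v)}).Reachable v x} = {x | ∃ n, par^[n] x = v} := by
    intro v hv
    ext x
    exact ⟨fun h => reach_sub v hv x h, fun h => reach_to v hv x h⟩
  have class_pv : ∀ v, v ≠ r →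
      {x | (G.deleteEdges {s(v, par v)}).Reachable (par v) x} =
        {x | ∃ n, par^[n] x = v}ᶜ := by
    intro v hv
    ext x
    constructor
    · intro h hxD
      have h1 : (G.deleteEdges {s(v, par v)}).Reachable v x := reach_to v hv x hxD
      have h2 : (G.deleteEdges {s(v, par v)}).Reachable v (par v) := h1.trans h.symm
      exact pt_parnot v hv (reach_sub v hv (par v) h2)
    · intro hxD
      have h1 : (G.deleteEdges {s(v, par v)}).Reachable x r :=
        reach_out v hv x hxD
      have h2 : (G.deleteEdges {s(v, par v)}).Reachable (par v) r :=
        reach_out v hv (par v) (pt_parnot v hv)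
      exact h2.trans h1.symm
  have hacyc : G.IsAcyclic := by
    rw [isAcyclic_iff_forall_adj_isBridge]
    intro a b hab
    have hab' := hab
    rw [hG, SimpleGraph.fromRel_adj] at hab'
    obtain ⟨hne, hor⟩ := hab'
    rw [SimpleGraph.isBridge_iff]
    rcases hor with hpa | hpb
    · -- b = par a
      have har : a ≠ r := by
        intro h; subst h; rw [hr] at hpa; exact hne hpa
      subst hpa
      intro hre
      exact pt_parnot a har (reach_sub a har (par a) hre)
    · -- a = par b
      have hbr : b ≠ r := by
        intro h; subst h; rw [hr] at hpb; exact hne hpb.symm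
      subst hpb
      intro hre
      rw [Sym2.eq_swap] at hre
      exact pt_parnot b hbr (reach_sub b hbr (par b) hre.symm)
  refine ⟨⟨hconn, hacyc⟩, fun v hv => ⟨adj_par v (pt_ne v hv), class_v v hv, class_pv v hv⟩⟩
end ParTree
section Stage2

variable [Fintype E]

lemma stage2 (L : Finset (Set E))
    (hlam : ∀ A ∈ L, ∀ B ∈ L, A ⊆ B ∨ B ⊆ A ∨ A ∩ B = ∅)
    (hneL : ∀ A ∈ L, A ≠ ∅) (hproperL : ∀ A ∈ L, A ≠ Set.univ) :
    ∃ (V : Type) (_ : Fintype V) (G : SimpleGraph V) (P : V → Set E),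
      G.IsTree ∧ IsPartitionFam P ∧
      ∀ A ∈ L, ∃ t u, G.Adj t u ∧ treeSide G P t u = A ∧ treeSide G P u t = Aᶜ := by
  classical
  set M : Finset (Set E) := insert Set.univ L with hM
  have hunivM : Set.univ ∈ M := Finset.mem_insert_self _ _
  have hLM : ∀ A ∈ L, A ∈ M := fun A hA => Finset.mem_insert_of_mem hA
  have hlam' : ∀ A ∈ M, ∀ B ∈ M, A ⊆ B ∨ B ⊆ A ∨ A ∩ B = ∅ := by
    intro A hA B hB
    rcases Finset.mem_insert.1 hA with rfl | hA
    · exact Or.inr (Or.inl (Set.subset_univ B))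
    · rcases Finset.mem_insert.1 hB with rfl | hB
      · exact Or.inl (Set.subset_univ A)
      · exact hlam A hA B hB
  have hLmem : ∀ A ∈ M, A ≠ Set.univ → A ∈ L := by
    intro A hA hne
    rcases Finset.mem_insert.1 hA with rfl | h
    · exact absurd rfl hne
    · exact h
  -- parent function on the subtype
  have hsup : ∀ v : {A // A ∈ M}, v.1 ≠ Set.univ →
      ∃ w : {A // A ∈ M}, v.1 ⊂ w.1 ∧ ∀ u : {A // A ∈ M}, v.1 ⊂ u.1 → w.1 ⊆ u.1 := by
    intro v hv
    have hvL : v.1 ∈ L := hLmem v.1 v.2 hv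
    have hvne : v.1.Nonempty := Set.nonempty_iff_ne_empty.2 (hneL v.1 hvL)
    have hfil : (M.filter (fun B => v.1 ⊂ B)).Nonempty :=
      ⟨Set.univ, Finset.mem_filter.2 ⟨hunivM, (Set.ssubset_univ_iff).2 hv⟩⟩
    obtain ⟨B, hBmem, hBmin⟩ : ∃ B ∈ M.filter (fun B => v.1 ⊂ B),
        ∀ x ∈ M.filter (fun B => v.1 ⊂ B), ¬ x < B := by
      obtain ⟨B, hB⟩ := (M.filter (fun B => v.1 ⊂ B)).finite_toSet.exists_minimal
        (Finset.coe_nonempty.2 hfil)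
      exact ⟨B, hB.prop, fun x hx hlt => hB.not_lt (by exact hx) hlt⟩
    obtain ⟨hBM, hvB⟩ := Finset.mem_filter.1 hBmem
    refine ⟨⟨B, hBM⟩, hvB, ?_⟩
    intro u hu
    rcases hlam' B hBM u.1 u.2 with h | h | h
    · exact h
    · rcases eq_or_lt_of_le h with h' | h'
      · exact h'.ge
      · exact absurd h' (hBmin u.1 (Finset.mem_filter.2 ⟨u.2, hu⟩))
    · exfalso
      obtain ⟨x, hx⟩ := hvne
      exact Set.eq_empty_iff_forall_notMem.1 h x ⟨hvB.1 hx, hu.1 hx⟩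
  set parM : {A // A ∈ M} → {A // A ∈ M} := fun v =>
    if h : v.1 = Set.univ then v else Classical.choose (hsup v h) with hparM
  set rM : {A // A ∈ M} := ⟨Set.univ, hunivM⟩ with hrMdef
  have parM_root : parM rM = rM := by simp [hparM, hrMdef]
  have parM_spec : ∀ v : {A // A ∈ M}, v.1 ≠ Set.univ →
      v.1 ⊂ (parM v).1 ∧ ∀ u : {A // A ∈ M}, v.1 ⊂ u.1 → (parM v).1 ⊆ u.1 := by
    intro v hv
    have h : parM v = Classical.choose (hsup v hv) := by simp [hparM, hv]
    rw [h]
    exact Classical.choose_spec (hsup v hv)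
  have parM_mono : ∀ v : {A // A ∈ M}, v.1 ⊆ (parM v).1 := by
    intro v
    by_cases hv : v.1 = Set.univ
    · simp [hparM, hv]
    · exact (parM_spec v hv).1.subset
  have parM_iter_mono : ∀ (n : ℕ) (v : {A // A ∈ M}), v.1 ⊆ (parM^[n] v).1 := by
    intro n
    induction n with
    | zero => intro v; rfl
    | succ m IH =>
      intro v
      rw [Function.iterate_succ_apply]
      exact (parM_mono v).trans (IH (parM v))
  have htermM : ∀ v : {A // A ∈ M}, ∃ n, parM^[n] v = rM := by
    have main : ∀ (k : ℕ) (v : {A // A ∈ M}), (Set.univ \ v.1).ncard ≤ k →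
        ∃ n, parM^[n] v = rM := by
      intro k
      induction k with
      | zero =>
        intro v hv
        have h0 : Set.univ \ v.1 = ∅ := by
          rw [← Set.ncard_eq_zero (Set.toFinite _)]
          omega
        have h1 : v.1 = Set.univ := by
          rw [Set.diff_eq_empty] at h0
          exact Set.eq_univ_of_univ_subset h0
        exact ⟨0, Subtype.ext h1⟩
      | succ k IH =>
        intro v hv
        by_cases hvu : v.1 = Set.univ
        · exact ⟨0, Subtype.ext hvu⟩
        · have hlt : (Set.univ \ (parM v).1).ncard < (Set.univ \ v.1).ncard := by
            refine Set.ncard_lt_ncard ?_ (Set.toFinite _)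
            obtain ⟨hss, -⟩ := parM_spec v hvu
            obtain ⟨x, hx1, hx2⟩ := Set.exists_of_ssubset hss
            exact ⟨Set.diff_subset_diff_right hss.subset,
              fun hsub => (hsub ⟨trivial, hx2⟩).2 hx1⟩
          obtain ⟨n, hn⟩ := IH (parM v) (by omega)
          exact ⟨n + 1, by rwa [Function.iterate_succ_apply]⟩
    intro v
    exact main _ v le_rfl
  -- descendants correspond to subsets
  have desc_down : ∀ (v x : {A // A ∈ M}), (∃ n, parM^[n] x = v) → x.1 ⊆ v.1 := by
    rintro v x ⟨n, hn⟩
    rw [← hn]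
    exact parM_iter_mono n x
  have desc_up : ∀ (v x : {A // A ∈ M}), x.1 ⊆ v.1 → ∃ n, parM^[n] x = v := by
    have main : ∀ (k : ℕ) (v x : {A // A ∈ M}), (v.1 \ x.1).ncard ≤ k → x.1 ⊆ v.1 →
        ∃ n, parM^[n] x = v := by
      intro k
      induction k with
      | zero =>
        intro v x hk hsub
        have h0 : v.1 \ x.1 = ∅ := by
          rw [← Set.ncard_eq_zero (Set.toFinite _)]
          omega
        rw [Set.diff_eq_empty] at h0
        exact ⟨0, Subtype.ext (hsub.antisymm h0)⟩
      | succ k IH =>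
        intro v x hk hsub
        by_cases hxv : x.1 = v.1
        · exact ⟨0, Subtype.ext hxv⟩
        · have hss : x.1 ⊂ v.1 := ⟨hsub, fun h => hxv (hsub.antisymm h)⟩
          have hxu : x.1 ≠ Set.univ := by
            intro h
            rw [h] at hss
            exact hss.2 (Set.subset_univ _)
          obtain ⟨hstep, hleast⟩ := parM_spec x hxu
          have hsub' : (parM x).1 ⊆ v.1 := hleast v hss
          have hlt : (v.1 \ (parM x).1).ncard < (v.1 \ x.1).ncard := by
            refine Set.ncard_lt_ncard ?_ (Set.toFinite _)
            obtain ⟨y, hy1, hy2⟩ := Set.exists_of_ssubset hstep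
            exact ⟨Set.diff_subset_diff_right hstep.subset,
              fun hsub2 => (hsub2 ⟨hsub' hy1, hy2⟩).2 hy1⟩
          obtain ⟨n, hn⟩ := IH v (parM x) (by omega) hsub'
          exact ⟨n + 1, by rwa [Function.iterate_succ_apply]⟩
    intro v x hsub
    exact main _ v x le_rfl hsub
  -- transfer to Fin
  set m : ℕ := Fintype.card {A // A ∈ M} with hm
  set ψ : Fin m ≃ {A // A ∈ M} := (Fintype.equivFin {A // A ∈ M}).symm with hψ
  set FA : Fin m → Set E := fun i => (ψ i).1 with hFA
  set par : Fin m → Fin m := fun i => ψ.symm (parM (ψ i)) with hpar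
  set rfin : Fin m := ψ.symm rM with hrfin
  have hconj : ∀ (n : ℕ) (i : Fin m), par^[n] i = ψ.symm (parM^[n] (ψ i)) := by
    intro n
    induction n with
    | zero => intro i; simp
    | succ k IH =>
      intro i
      rw [Function.iterate_succ_apply', IH, Function.iterate_succ_apply']
      simp [hpar]
  have hrfix : par rfin = rfin := by
    simp [hpar, hrfin, parM_root]
  have hterm : ∀ i : Fin m, ∃ n, par^[n] i = rfin := by
    intro i
    obtain ⟨n, hn⟩ := htermM (ψ i)
    exact ⟨n, by rw [hconj, hn, hrfin]⟩
  obtain ⟨htree, hedges⟩ := partree par rfin hrfix hterm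
  set G : SimpleGraph (Fin m) := SimpleGraph.fromRel (fun x y => par x = y) with hG
  set Part : Set E → Set E := fun A => A \ ⋃₀ {B : Set E | B ∈ L ∧ B ⊂ A} with hPart
  set P : Fin m → Set E := fun i => Part (FA i) with hP
  have hPsub : ∀ A, Part A ⊆ A := fun A => Set.diff_subset
  have FA_inj : Function.Injective FA := by
    intro i j hij
    exact ψ.injective (Subtype.ext hij)
  have Part_disj : ∀ A ∈ M, ∀ B ∈ M, A ≠ B → Disjoint (Part A) (Part B) := by
    intro A hA B hB hAB
    rw [Set.disjoint_iff_inter_eq_empty]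
    rcases hlam' A hA B hB with h | h | h
    · -- A ⊂ B, so A ∈ L and Part B misses A
      have hss : A ⊂ B := ⟨h, fun h2 => hAB (h.antisymm h2)⟩
      have hAL : A ∈ L := hLmem A hA (by
        intro h3; rw [h3] at hss; exact hss.2 (Set.subset_univ _))
      ext x
      simp only [Set.mem_inter_iff, Set.mem_empty_iff_false, iff_false, not_and]
      intro hx1 hx2
      exact hx2.2 ⟨A, ⟨hAL, hss⟩, hPsub A hx1⟩
    · have hss : B ⊂ A := ⟨h, fun h2 => hAB (h2.antisymm h)⟩
      have hBL : B ∈ L := hLmem B hB (by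
        intro h3; rw [h3] at hss; exact hss.2 (Set.subset_univ _))
      ext x
      simp only [Set.mem_inter_iff, Set.mem_empty_iff_false, iff_false, not_and]
      intro hx1 hx2
      exact hx1.2 ⟨B, ⟨hBL, hss⟩, hPsub B hx2⟩
    · ext x
      simp only [Set.mem_inter_iff, Set.mem_empty_iff_false, iff_false, not_and]
      intro hx1 hx2
      exact Set.eq_empty_iff_forall_notMem.1 h x ⟨hPsub A hx1, hPsub B hx2⟩
  -- the key union fact
  have key : ∀ v : Fin m, (⋃ x ∈ {x : Fin m | ∃ n, par^[n] x = v}, P x) = FA v := by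
    intro v
    apply Set.Subset.antisymm
    · refine Set.iUnion₂_subset ?_
      intro x hx
      obtain ⟨n, hn⟩ := hx
      have : (∃ n, parM^[n] (ψ x) = ψ v) := by
        refine ⟨n, ?_⟩
        have := hconj n x
        rw [hn] at this
        have h2 := congrArg ψ this.symm
        simpa using h2
      exact (hPsub (FA x)).trans (desc_down (ψ v) (ψ x) this)
    · intro e he
      -- choose a minimal element of M containing e and contained in FA v
      have hfil : (M.filter (fun B => e ∈ B ∧ B ⊆ FA v)).Nonempty :=
        ⟨FA v, Finset.mem_filter.2 ⟨(ψ v).2, he, subset_rfl⟩⟩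
      obtain ⟨B, hBmem, hBmin⟩ : ∃ B ∈ M.filter (fun B => e ∈ B ∧ B ⊆ FA v),
          ∀ x ∈ M.filter (fun B => e ∈ B ∧ B ⊆ FA v), ¬ x < B := by
        obtain ⟨B, hB⟩ := (M.filter (fun B => e ∈ B ∧ B ⊆ FA v)).finite_toSet.exists_minimal
          (Finset.coe_nonempty.2 hfil)
        exact ⟨B, hB.prop, fun x hx hlt => hB.not_lt (by exact hx) hlt⟩
      obtain ⟨hBM, heB, hBsub⟩ := Finset.mem_filter.1 hBmem
      have hePart : e ∈ Part B := by
        refine ⟨heB, ?_⟩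
        rintro ⟨C, ⟨hCL, hCss⟩, heC⟩
        exact hBmin C (Finset.mem_filter.2 ⟨hLM C hCL, heC, hCss.subset.trans hBsub⟩) hCss
      set x : Fin m := ψ.symm ⟨B, hBM⟩ with hx
      have hFAx : FA x = B := by simp [hFA, hx]
      refine Set.mem_iUnion₂.2 ⟨x, ?_, ?_⟩
      · obtain ⟨n, hn⟩ := desc_up (ψ v) ⟨B, hBM⟩ hBsub
        refine ⟨n, ?_⟩
        rw [hconj]
        simp [hx, hn]
      · rw [hP]
        simpa [hFAx] using hePart
  have hcover : (⋃ i, P i) = Set.univ := by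
    apply Set.eq_univ_of_univ_subset
    have h := (key rfin).symm.subset
    have hFAr : FA rfin = Set.univ := by simp [hFA, hrfin, hrMdef]
    rw [hFAr] at h
    refine h.trans ?_
    exact Set.iUnion₂_subset fun x _ => Set.subset_iUnion P x
  have hpart : IsPartitionFam P := by
    constructor
    · intro i j hij
      exact Part_disj (FA i) (ψ i).2 (FA j) (ψ j).2 (fun h => hij (FA_inj h))
    · exact hcover
  -- complement side of the partition
  have hside_compl : ∀ S : Set (Fin m), (⋃ x ∈ Sᶜ, P x) = (⋃ x ∈ S, P x)ᶜ := by
    intro S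
    apply Set.Subset.antisymm
    · intro e he
      obtain ⟨x, hxS, hxe⟩ := Set.mem_iUnion₂.1 he
      intro hmem
      obtain ⟨y, hyS, hye⟩ := Set.mem_iUnion₂.1 hmem
      have hxy : x ≠ y := fun h => hxS (h ▸ hyS)
      exact Set.disjoint_left.1 (hpart.1 x y hxy) hxe hye
    · intro e he
      have : e ∈ ⋃ i, P i := hcover ▸ Set.mem_univ e
      obtain ⟨x, hxe⟩ := Set.mem_iUnion.1 this
      have hxS : x ∈ Sᶜ := by
        intro hxSmem
        exact he (Set.mem_biUnion hxSmem hxe)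
      exact Set.mem_biUnion hxS hxe
  -- realize each A ∈ L
  refine ⟨Fin m, inferInstance, G, P, htree, hpart, ?_⟩
  intro A hA
  set v : Fin m := ψ.symm ⟨A, hLM A hA⟩ with hv
  have hFAv : FA v = A := by simp [hFA, hv]
  have hvr : v ≠ rfin := by
    intro h
    have := congrArg (fun i => (ψ i).1) h
    simp [hv, hrfin, hrMdef] at this
    exact hproperL A hA this
  obtain ⟨hadj, hcls1, hcls2⟩ := hedges v hvr
  refine ⟨v, par v, hadj, ?_, ?_⟩
  · show (⋃ x ∈ {x : Fin m | (G.deleteEdges {s(v, par v)}).Reachable v x}, P x) = A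
    rw [hG, hcls1, key v]
    exact hFAv
  · show (⋃ x ∈ {x : Fin m | (G.deleteEdges {s(par v, v)}).Reachable (par v) x}, P x) = Aᶜ
    have hswap : ({s(par v, v)} : Set (Sym2 (Fin m))) = {s(v, par v)} := by
      rw [Sym2.eq_swap]
    rw [hG, hswap, hcls2, hside_compl, key v, hFAv]
end Stage2
section Main

lemma lam_helper {e₀ : E} {B B' : Set E} (h : Nested B Bᶜ B' B'ᶜ)
    (h1 : e₀ ∉ B) (h2 : e₀ ∉ B') : B ⊆ B' ∨ B' ⊆ B ∨ B ∩ B' = ∅ := by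
  rcases h with h | h | h | h
  · exact Or.inl h
  · exact Or.inr (Or.inr (by
      rw [Set.subset_compl_iff_disjoint_right] at h
      exact Set.disjoint_iff_inter_eq_empty.1 h))
  · exact absurd (h h1) h2
  · exact Or.inr (Or.inl (by simpa using Set.compl_subset_compl.2 h))

/-- Tangle-tree theorem: there is a tree-decomposition distinguishing any two
(distinct) maximal tangles efficiently. -/
theorem stmt_14 [Fintype E] (f : Set E → ℤ) (hsym : FSymm f) (hsub : FSubmod f) :
    ∃ (V : Type) (_ : Fintype V) (G : SimpleGraph V) (P : V → Set E),
      G.IsTree ∧ IsPartitionFam P ∧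
      ∀ P' Q : Set (Set E), IsMaximalTangle f P' → IsMaximalTangle f Q →
        P' ≠ Q → ∃ t u, G.Adj t u ∧ DistinguishesEff f (treeSide G P t u) P' Q := by
  classical
  obtain ⟨N, hnest, hproper, hdist⟩ := stage1 f hsym hsub
  by_cases hN : N = ∅
  · obtain ⟨V, fV, G, P, htree, hpart, -⟩ :=
      stage2 (E := E) ∅ (by simp) (by simp) (by simp)
    refine ⟨V, fV, G, P, htree, hpart, ?_⟩
    intro P' Q hP' hQ hne
    obtain ⟨A, hA, -⟩ := hdist P' Q hP' hQ hne
    rw [hN] at hA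
    exact absurd hA (Finset.notMem_empty A)
  · obtain ⟨A₀, hA₀⟩ := Finset.nonempty_of_ne_empty hN
    obtain ⟨e₀, -⟩ := Set.nonempty_iff_ne_empty.2 (hproper A₀ hA₀).1
    set tr : Set E → Set E := fun A => if e₀ ∈ A then Aᶜ else A with htr
    set L : Finset (Set E) := N.image tr with hL
    have htr_not : ∀ A, e₀ ∉ tr A := by
      intro A
      by_cases h : e₀ ∈ A
      · simp [htr, h]
      · simp [htr, h]
    have htr_nested : ∀ A ∈ N, ∀ A' ∈ N, Nested (tr A) (tr A)ᶜ (tr A') (tr A')ᶜ := by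
      intro A hA A' hA'
      have h := hnest A hA A' hA'
      by_cases h1 : e₀ ∈ A <;> by_cases h2 : e₀ ∈ A' <;>
        simp only [htr, if_pos, if_neg, h1, h2, if_true, if_false]
      · exact nested_complr (nested_compll h)
      · exact nested_compll h
      · exact nested_complr h
      · exact h
    have hL1 : ∀ B ∈ L, ∀ B' ∈ L, B ⊆ B' ∨ B' ⊆ B ∨ B ∩ B' = ∅ := by
      intro B hB B' hB'
      obtain ⟨A, hA, rfl⟩ := Finset.mem_image.1 hB
      obtain ⟨A', hA', rfl⟩ := Finset.mem_image.1 hB'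
      exact lam_helper (htr_nested A hA A' hA') (htr_not A) (htr_not A')
    have hL2 : ∀ B ∈ L, B ≠ ∅ := by
      intro B hB
      obtain ⟨A, hA, rfl⟩ := Finset.mem_image.1 hB
      by_cases h : e₀ ∈ A
      · simp only [htr, if_pos h]
        intro hc
        exact (hproper A hA).2 (by simpa using congrArg compl hc)
      · simp only [htr, if_neg h]
        exact (hproper A hA).1
    have hL3 : ∀ B ∈ L, B ≠ Set.univ := by
      intro B hB hc
      obtain ⟨A, hA, rfl⟩ := Finset.mem_image.1 hB
      exact htr_not A (by rw [hc]; trivial)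
    obtain ⟨V, fV, G, P, htree, hpart, hreal⟩ := stage2 L hL1 hL2 hL3
    refine ⟨V, fV, G, P, htree, hpart, ?_⟩
    intro P' Q hP' hQ hne
    obtain ⟨A, hA, heff⟩ := hdist P' Q hP' hQ hne
    have hmem : tr A ∈ L := Finset.mem_image_of_mem tr hA
    obtain ⟨t, u, hadj, hts1, hts2⟩ := hreal (tr A) hmem
    by_cases h : e₀ ∈ A
    · refine ⟨u, t, hadj.symm, ?_⟩
      have : tr A = Aᶜ := by simp [htr, h]
      rw [this] at hts2
      rw [hts2, compl_compl]
      exact heff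
    · refine ⟨t, u, hadj, ?_⟩
      have : tr A = A := by simp [htr, h]
      rw [this] at hts1
      rw [hts1]
      exact heff
end Main
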